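/- Let 0 < β < 1, σ > 0 with σ ≠ 1, γ > 0, π ≥ 0, δ* > 0, ρ > 0 with ρ < δ* < ρ + δ*σ, and c₀, k₀, u₀, z₀ > 0 with D := σc₀z₀^{β−1} − (ρ+π−πσ)k₀z₀^{β−1} + βγ(1−σ)k₀ satisfying γ(1−β)(ρ−δ*+δ*σ)/δ* = (u₀/k₀)·D. Set ξ := (δ*+π(1−β))/β − (δ*−ρ)/σ, z̄ := ((δ*+π)/(βγ))^{1/(1−β)}, ū := (ρ+δ*(σ−1))/(δ*σ), K := k₀/(c₀z₀^{(β−σ)/σ}), z(t) := z̄z₀/[(z̄^{1−β}−z₀^{1−β})e^{−((1−β)(δ*+π)/β)t}+z₀^{1−β}]^{1/(1−β)}, F(t) := ∫₀ᵗ z(s)^{(σ−β)/σ}e^{−ξ s} ds, and u(t) := (u₀/k₀)·D·(K−F(t)) / [ (βγ(1−σ)−(ρ+π−πσ)z(t)^{β−1})(K−F(t)) + σ·z(t)^{β−β/σ}e^{−ξ t} ]. Assume K − F(t) > 0 and the denominator of u(t) is positive for all t ≥ 0, and lim_{t→∞} F(t) = K. Then u(t) tends to ū as t → ∞. -/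

import Mathlib

open Filter

open intervalIntegral in
private lemma exp_integral_aux (a b c : ℝ) (hc : c ≠ 0) :
    ∫ s in a..b, Real.exp (c*s) = (Real.exp (c*b) - Real.exp (c*a))/c := by
  rw [intervalIntegral.integral_comp_mul_left (fun x => Real.exp x) hc, integral_exp]
  simp [smul_eq_mul]; ring

set_option maxHeartbeats 1000000 in
theorem u_tendsto_ubar (β σ γ pi δs ρ c0 k0 u0 z0 : ℝ)
    (hβ0 : 0 < β) (hβ1 : β < 1) (hσ : 0 < σ) (hσ1 : σ ≠ 1) (hγ : 0 < γ)
    (hpi : 0 ≤ pi) (hδs : 0 < δs) (hρ : 0 < ρ) (hρδ : ρ < δs)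
    (hδρ : δs < ρ + δs * σ)
    (hc0 : 0 < c0) (hk0 : 0 < k0) (hu0 : 0 < u0) (hz0 : 0 < z0)
    (D : ℝ)
    (hD : D = σ * c0 * z0 ^ (β - 1) - (ρ + pi - pi * σ) * k0 * z0 ^ (β - 1)
      + β * γ * (1 - σ) * k0)
    (hslope : γ * (1 - β) * (ρ - δs + δs * σ) / δs = u0 / k0 * D)
    (ξ zbar ubar K : ℝ)
    (hξ : ξ = (δs + pi * (1 - β)) / β - (δs - ρ) / σ)
    (hzbar : zbar = ((δs + pi) / (β * γ)) ^ (1 / (1 - β)))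
    (hubar : ubar = (ρ + δs * (σ - 1)) / (δs * σ))
    (hK : K = k0 / (c0 * z0 ^ ((β - σ) / σ)))
    (z F u : ℝ → ℝ)
    (hz : ∀ t, z t = zbar * z0 /
      ((zbar ^ (1 - β) - z0 ^ (1 - β)) * Real.exp (-((1 - β) * (δs + pi) / β) * t)
        + z0 ^ (1 - β)) ^ (1 / (1 - β)))
    (hF : ∀ t, F t = ∫ s in (0:ℝ)..t, z s ^ ((σ - β) / σ) * Real.exp (-ξ * s))
    (hu : ∀ t, u t = u0 / k0 * D * (K - F t) /
      ((β * γ * (1 - σ) - (ρ + pi - pi * σ) * z t ^ (β - 1)) * (K - F t)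
        + σ * z t ^ (β - β / σ) * Real.exp (-ξ * t)))
    (hKF : ∀ t ≥ (0:ℝ), 0 < K - F t)
    (hden : ∀ t ≥ (0:ℝ),
      0 < (β * γ * (1 - σ) - (ρ + pi - pi * σ) * z t ^ (β - 1)) * (K - F t)
        + σ * z t ^ (β - β / σ) * Real.exp (-ξ * t))
    (hFlim : Tendsto F atTop (nhds K)) :
    Tendsto u atTop (nhds ubar) := by
  have hβ1' : (0:ℝ) < 1 - β := by linarith
  have hδpi : 0 < δs + pi := by linarith
  have hX : 0 < (δs + pi) / (β * γ) := div_pos hδpi (mul_pos hβ0 hγ)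
  have hzbar_pos : 0 < zbar := by rw [hzbar]; exact Real.rpow_pos_of_pos hX _
  have hξpos : 0 < ξ := by
    rw [hξ]
    have h1 : (δs - ρ) / σ < δs := (div_lt_iff₀ hσ).2 (by nlinarith)
    have h2 : δs < (δs + pi * (1 - β)) / β := by
      rw [lt_div_iff₀ hβ0]; nlinarith
    linarith
  set c : ℝ := (1 - β) * (δs + pi) / β with hc
  have hcpos : 0 < c := by positivity
  set p : ℝ := (σ - β) / σ with hp
  set q : ℝ := β - β / σ with hq
  set Acoef : ℝ := zbar ^ (1 - β) - z0 ^ (1 - β) with hAcoef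
  set B0 : ℝ := z0 ^ (1 - β) with hB0
  have hB0pos : 0 < B0 := Real.rpow_pos_of_pos hz0 _
  have hZbpos : 0 < zbar ^ (1 - β) := Real.rpow_pos_of_pos hzbar_pos _
  -- inner function positivity on [0,∞)
  have hinner : ∀ s : ℝ, 0 ≤ s → 0 < Acoef * Real.exp (-c * s) + B0 := by
    intro s hs
    have he1 : Real.exp (-c * s) ≤ 1 := by
      rw [Real.exp_le_one_iff]; nlinarith
    have he0 : 0 < Real.exp (-c * s) := Real.exp_pos _
    rw [hAcoef, hB0]; nlinarith
  -- z is continuous and positive on [0, ∞)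
  have hzformula : ∀ s, z s = zbar * z0 / (Acoef * Real.exp (-c * s) + B0) ^ (1/(1-β)) := by
    intro s; rw [hz s]
  have hzpos : ∀ s : ℝ, 0 ≤ s → 0 < z s := by
    intro s hs
    rw [hzformula s]
    exact div_pos (mul_pos hzbar_pos hz0) (Real.rpow_pos_of_pos (hinner s hs) _)
  have hzcont : ContinuousOn z (Set.Ici 0) := by
    have h1 : ContinuousOn (fun s => Acoef * Real.exp (-c * s) + B0) (Set.Ici 0) :=
      Continuous.continuousOn (by fun_prop)
    have h2 : ContinuousOn (fun s => (Acoef * Real.exp (-c * s) + B0) ^ (1/(1-β)))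
        (Set.Ici 0) :=
      h1.rpow_const (fun s hs => Or.inl (ne_of_gt (hinner s hs)))
    have h3 : ContinuousOn (fun s => zbar * z0 / (Acoef * Real.exp (-c * s) + B0) ^ (1/(1-β)))
        (Set.Ici 0) :=
      continuousOn_const.div h2
        (fun s hs => ne_of_gt (Real.rpow_pos_of_pos (hinner s hs) _))
    exact h3.congr (fun s _ => hzformula s)
  -- limit of z
  have hzlim : Tendsto z atTop (nhds zbar) := by
    have hinlim : Tendsto (fun s => Acoef * Real.exp (-c * s) + B0) atTop (nhds B0) := by
      have : Tendsto (fun s : ℝ => Real.exp (-c * s)) atTop (nhds 0) := by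
        have h := Real.tendsto_exp_neg_atTop_nhds_zero.comp
          (Tendsto.const_mul_atTop hcpos tendsto_id)
        refine h.congr (fun s => ?_)
        simp [Function.comp]
      simpa using (this.const_mul Acoef).add_const B0
    have hcont2 : ContinuousAt (fun x : ℝ => x ^ (1/(1-β))) B0 :=
      Real.continuousAt_rpow_const _ _ (Or.inl (ne_of_gt hB0pos))
    have h3 : Tendsto (fun s => (Acoef * Real.exp (-c * s) + B0) ^ (1/(1-β))) atTop
        (nhds (B0 ^ (1/(1-β)))) := hcont2.tendsto.comp hinlim
    have hB0r : B0 ^ (1/(1-β)) = z0 := by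
      rw [hB0, ← Real.rpow_mul hz0.le, mul_one_div, div_self (ne_of_gt hβ1'), Real.rpow_one]
    have h4 : Tendsto (fun s => zbar * z0 / (Acoef * Real.exp (-c * s) + B0) ^ (1/(1-β)))
        atTop (nhds (zbar * z0 / z0)) := by
      rw [← hB0r]
      exact (tendsto_const_nhds.div h3 (by rw [hB0r]; exact ne_of_gt hz0))
    rw [mul_div_assoc, div_self (ne_of_gt hz0), mul_one] at h4
    exact h4.congr (fun s => (hzformula s).symm)
  -- limits of powers of z
  have hrp : ∀ r : ℝ, Tendsto (fun t => z t ^ r) atTop (nhds (zbar ^ r)) := fun r =>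
    (Real.continuousAt_rpow_const _ _ (Or.inl (ne_of_gt hzbar_pos))).tendsto.comp hzlim
  set W : ℝ := zbar ^ p with hW
  have hWpos : 0 < W := Real.rpow_pos_of_pos hzbar_pos _
  set g : ℝ → ℝ := fun s => z s ^ p * Real.exp (-ξ * s) with hg
  have hgcont : ContinuousOn g (Set.Ici 0) :=
    (hzcont.rpow_const (fun s hs => Or.inl (ne_of_gt (hzpos s hs)))).mul
      (Continuous.continuousOn (by fun_prop))
  have hgint : ∀ a b : ℝ, 0 ≤ a → 0 ≤ b →
      IntervalIntegrable g MeasureTheory.volume a b := by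
    intro a b ha hb
    exact (hgcont.mono (fun x hx => le_trans (le_inf ha hb) hx.1)).intervalIntegrable
  have hFdiff : ∀ a b : ℝ, 0 ≤ a → 0 ≤ b → F b - F a = ∫ s in a..b, g s := by
    intro a b ha hb
    rw [hF a, hF b,
      ← intervalIntegral.integral_add_adjacent_intervals (hgint 0 a le_rfl ha)
        (hgint a b ha hb)]
    ring
  have hexplim : Tendsto (fun t : ℝ => Real.exp (-ξ * t)) atTop (nhds 0) := by
    have h := Real.tendsto_exp_neg_atTop_nhds_zero.comp
      (Tendsto.const_mul_atTop hξpos tendsto_id)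
    refine h.congr (fun s => ?_)
    simp [Function.comp]
  -- key bounds on K - F t
  have key : ∀ ε : ℝ, 0 < ε → ε < W → ∃ T : ℝ, 0 ≤ T ∧ ∀ t ≥ T,
      (W - ε) * Real.exp (-ξ*t) / ξ ≤ K - F t ∧
      K - F t ≤ (W + ε) * Real.exp (-ξ*t) / ξ := by
    intro ε hε hεW
    obtain ⟨T0, hT0⟩ := (Metric.tendsto_atTop.1 (hrp p)) ε hε
    refine ⟨max T0 0, le_max_right _ _, fun t ht => ?_⟩
    have ht0 : (0:ℝ) ≤ t := le_trans (le_max_right _ _) ht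
    have hzbd : ∀ s, t ≤ s → |z s ^ p - W| < ε := fun s hs =>
      hT0 s (le_trans (le_trans (le_max_left _ _) ht) hs)
    -- integral bounds for T' ≥ t
    have hbound : ∀ T' : ℝ, t ≤ T' →
        (W - ε) * ((Real.exp (-ξ*t) - Real.exp (-ξ*T'))/ξ) ≤ F T' - F t ∧
        F T' - F t ≤ (W + ε) * ((Real.exp (-ξ*t) - Real.exp (-ξ*T'))/ξ) := by
      intro T' hT'
      have hT'0 : (0:ℝ) ≤ T' := le_trans ht0 hT'
      have hexpint : ∀ d : ℝ, IntervalIntegrable (fun s => d * Real.exp (-ξ*s))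
          MeasureTheory.volume t T' := fun d => Continuous.intervalIntegrable (by fun_prop) _ _
      have hexpval : ∀ d : ℝ, (∫ s in t..T', d * Real.exp (-ξ*s))
          = d * ((Real.exp (-ξ*t) - Real.exp (-ξ*T'))/ξ) := by
        intro d
        rw [intervalIntegral.integral_const_mul, exp_integral_aux t T' (-ξ) (by linarith)]
        rw [div_neg]
        ring
      rw [hFdiff t T' ht0 hT'0]
      constructor
      · rw [← hexpval (W - ε)]
        apply intervalIntegral.integral_mono_on hT' (hexpint _) (hgint t T' ht0 hT'0)
        intro s hs
        have h1 := abs_lt.1 (hzbd s hs.1)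
        have h2 : 0 < Real.exp (-ξ*s) := Real.exp_pos _
        show (W - ε) * Real.exp (-ξ*s) ≤ z s ^ p * Real.exp (-ξ*s)
        nlinarith [h1.1]
      · rw [← hexpval (W + ε)]
        apply intervalIntegral.integral_mono_on hT' (hgint t T' ht0 hT'0) (hexpint _)
        intro s hs
        have h1 := abs_lt.1 (hzbd s hs.1)
        have h2 : 0 < Real.exp (-ξ*s) := Real.exp_pos _
        show z s ^ p * Real.exp (-ξ*s) ≤ (W + ε) * Real.exp (-ξ*s)
        nlinarith [h1.2]
    -- take limits as T' → ∞
    have hlimF : Tendsto (fun T' => F T' - F t) atTop (nhds (K - F t)) :=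
      hFlim.sub_const _
    have hlimE : ∀ d : ℝ, Tendsto
        (fun T' => d * ((Real.exp (-ξ*t) - Real.exp (-ξ*T'))/ξ)) atTop
        (nhds (d * ((Real.exp (-ξ*t) - 0)/ξ))) :=
      fun d => (((tendsto_const_nhds.sub hexplim).div_const ξ).const_mul d)
    constructor
    · have h := le_of_tendsto_of_tendsto (hlimE (W - ε)) hlimF
        ((eventually_ge_atTop t).mono (fun T' hb => (hbound T' hb).1))
      calc (W - ε) * Real.exp (-ξ*t) / ξ
          = (W - ε) * ((Real.exp (-ξ*t) - 0)/ξ) := by ring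
        _ ≤ K - F t := h
    · have h := le_of_tendsto_of_tendsto hlimF (hlimE (W + ε))
        ((eventually_ge_atTop t).mono (fun T' hb => (hbound T' hb).2))
      calc K - F t ≤ (W + ε) * ((Real.exp (-ξ*t) - 0)/ξ) := h
        _ = (W + ε) * Real.exp (-ξ*t) / ξ := by ring
  -- the limit of H t = (K - F t) * exp (ξ t)
  set H : ℝ → ℝ := fun t => (K - F t) * Real.exp (ξ * t) with hH
  have hHlim : Tendsto H atTop (nhds (W / ξ)) := by
    rw [Metric.tendsto_atTop]
    intro ε0 hε0
    set ε : ℝ := min (ε0 * ξ / 2) (W / 2) with hε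
    have hεpos : 0 < ε := lt_min (by positivity) (by positivity)
    have hεW : ε < W := lt_of_le_of_lt (min_le_right _ _) (by linarith)
    obtain ⟨T, hT0, hT⟩ := key ε hεpos hεW
    refine ⟨T, fun t ht => ?_⟩
    obtain ⟨hl, hr⟩ := hT t ht
    have hexpt : (0:ℝ) < Real.exp (ξ * t) := Real.exp_pos _
    have hee : Real.exp (-ξ * t) * Real.exp (ξ * t) = 1 := by
      rw [← Real.exp_add]; norm_num
    have hcancel : ∀ d : ℝ, d * Real.exp (-ξ*t) / ξ * Real.exp (ξ*t) = d / ξ := by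
      intro d
      have h1 : d * Real.exp (-ξ*t) / ξ * Real.exp (ξ*t)
          = d / ξ * (Real.exp (-ξ*t) * Real.exp (ξ*t)) := by ring
      rw [h1, hee, mul_one]
    have hHl : (W - ε)/ξ ≤ H t := by
      rw [← hcancel (W - ε)]
      exact mul_le_mul_of_nonneg_right hl hexpt.le
    have hHr : H t ≤ (W + ε)/ξ := by
      rw [← hcancel (W + ε)]
      exact mul_le_mul_of_nonneg_right hr hexpt.le
    rw [Real.dist_eq]
    have hsub : (W - ε)/ξ = W/ξ - ε/ξ := by ring
    have hadd : (W + ε)/ξ = W/ξ + ε/ξ := by ring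
    have habs : |H t - W/ξ| ≤ ε/ξ := by
      rw [abs_le]; rw [hsub] at hHl; rw [hadd] at hHr
      constructor <;> linarith
    have hεb : ε / ξ ≤ ε0 / 2 := by
      rw [div_le_div_iff₀ hξpos (by norm_num : (0:ℝ) < 2)]
      have := min_le_left (ε0 * ξ / 2) (W / 2)
      nlinarith
    linarith
  -- eventual closed form of u in terms of H
  have hueq : ∀ t : ℝ, 0 ≤ t → u t = u0/k0*D * H t /
      ((β*γ*(1-σ) - (ρ+pi-pi*σ) * z t ^ (β-1)) * H t + σ * z t ^ q) := by
    intro t ht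
    have hd := hden t ht
    have hexpt : (0:ℝ) < Real.exp (ξ * t) := Real.exp_pos _
    have hee : Real.exp (-ξ * t) * Real.exp (ξ * t) = 1 := by
      rw [← Real.exp_add]; norm_num
    set Bt : ℝ := β*γ*(1-σ) - (ρ+pi-pi*σ) * z t ^ (β-1) with hBt
    set N : ℝ := K - F t with hN
    have hHt : H t = N * Real.exp (ξ * t) := rfl
    have hkey : Bt * H t + σ * z t ^ q
        = (Bt * N + σ * z t ^ q * Real.exp (-ξ*t)) * Real.exp (ξ*t) := by
      rw [hHt]
      have h1 : (Bt * N + σ * z t ^ q * Real.exp (-ξ*t)) * Real.exp (ξ*t)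
          = Bt * (N * Real.exp (ξ*t))
            + σ * z t ^ q * (Real.exp (-ξ*t) * Real.exp (ξ*t)) := by ring
      rw [h1, hee, mul_one]
    rw [hu t]
    calc u0/k0*D*N/(Bt*N + σ * z t ^ q * Real.exp (-ξ*t))
        = u0/k0*D*N*Real.exp (ξ*t)
          /((Bt*N + σ * z t ^ q * Real.exp (-ξ*t))*Real.exp (ξ*t)) :=
          (mul_div_mul_right _ _ (ne_of_gt hexpt)).symm
      _ = u0/k0*D*(N*Real.exp (ξ*t))
          /((Bt*N + σ * z t ^ q * Real.exp (-ξ*t))*Real.exp (ξ*t)) := by ring_nf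
      _ = u0/k0*D * H t / (Bt * H t + σ * z t ^ q) := by rw [hkey, hHt]
  -- value of zbar ^ (β - 1)
  have hw : zbar ^ (β-1) = β*γ/(δs+pi) := by
    rw [hzbar, ← Real.rpow_mul hX.le]
    have h1 : 1/(1-β) * (β-1) = -1 := by
      field_simp
      ring
    rw [h1, Real.rpow_neg_one, inv_div]
  have hqsplit : zbar ^ q = β*γ/(δs+pi) * W := by
    rw [hW, ← hw, ← Real.rpow_add hzbar_pos]
    congr 1
    rw [hq, hp]
    field_simp
    ring
  set Bbar : ℝ := β*γ*(1-σ) - (ρ+pi-pi*σ) * zbar ^ (β-1) with hBbar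
  have hdenval' : Bbar * W + σ * zbar ^ q * ξ = σ*γ*(1-β)*W := by
    rw [hBbar, hqsplit, hw, hξ]
    field_simp
    ring
  have hdenval : Bbar * (W/ξ) + σ * zbar ^ q = σ*γ*(1-β)*W/ξ := by
    rw [eq_div_iff (ne_of_gt hξpos)]
    field_simp
    linear_combination hdenval'
  have hdenpos : (0:ℝ) < σ*γ*(1-β)*W/ξ := by positivity
  have hBtlim : Tendsto (fun t => β*γ*(1-σ) - (ρ+pi-pi*σ) * z t ^ (β-1)) atTop
      (nhds Bbar) := tendsto_const_nhds.sub ((hrp (β-1)).const_mul _)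
  have hdenlim : Tendsto (fun t => (β*γ*(1-σ) - (ρ+pi-pi*σ) * z t ^ (β-1)) * H t
      + σ * z t ^ q) atTop (nhds (Bbar * (W/ξ) + σ * zbar ^ q)) :=
    (hBtlim.mul hHlim).add ((hrp q).const_mul σ)
  have hulim : Tendsto (fun t => u0/k0*D * H t /
      ((β*γ*(1-σ) - (ρ+pi-pi*σ) * z t ^ (β-1)) * H t + σ * z t ^ q)) atTop
      (nhds (u0/k0*D*(W/ξ) / (Bbar * (W/ξ) + σ * zbar ^ q))) :=
    (hHlim.const_mul _).div hdenlim (by rw [hdenval]; exact ne_of_gt hdenpos)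
  have hfinal : u0/k0*D*(W/ξ) / (Bbar * (W/ξ) + σ * zbar ^ q) = ubar := by
    rw [hdenval, ← hslope, hubar]
    have hW0 : W ≠ 0 := ne_of_gt hWpos
    have hξ0 : ξ ≠ 0 := ne_of_gt hξpos
    field_simp
    ring
  rw [← hfinal]
  apply hulim.congr'
  filter_upwards [eventually_ge_atTop (0:ℝ)] with t ht
  exact (hueq t ht).symm
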